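/- Let λ > 0 and fix real J, Q. Define F₁(A) = A/(16π) + (π/A)(4J²+Q⁴) + Q²/2 and F₂(A) = J² + (A/(8π))(Q² + A/(4π) + λA²/(32π²)) for A > 0. Then inf_{A>0} [F₁(A) + λ F₂(A)] > inf_{A>0} F₁(A) = (Q² + √(Q⁴+4J²))/2, provided (J,Q) ≠ (0,0). -/

import Mathlib

noncomputable def F1 (J Q A : ℝ) : ℝ :=
  A / (16 * Real.pi) + (Real.pi / A) * (4 * J ^ 2 + Q ^ 4) + Q ^ 2 / 2

noncomputable def F2 (lam J Q A : ℝ) : ℝ :=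
  J ^ 2 + (A / (8 * Real.pi)) *
    (Q ^ 2 + A / (4 * Real.pi) + lam * A ^ 2 / (32 * Real.pi ^ 2))

theorem stmt3 (lam J Q : ℝ) (hlam : 0 < lam) (hJQ : (J, Q) ≠ (0, 0)) :
    sInf {x | ∃ A > 0, x = F1 J Q A} = (Q ^ 2 + Real.sqrt (Q ^ 4 + 4 * J ^ 2)) / 2 ∧
      (Q ^ 2 + Real.sqrt (Q ^ 4 + 4 * J ^ 2)) / 2 <
        sInf {x | ∃ A > 0, x = F1 J Q A + lam * F2 lam J Q A} := by
  have hπ := Real.pi_pos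
  set c : ℝ := Q ^ 4 + 4 * J ^ 2 with hc
  have hne : J ≠ 0 ∨ Q ≠ 0 := by
    by_contra h
    push_neg at h
    exact hJQ (by simp [Prod.ext_iff, h.1, h.2])
  have hc0 : 0 < c := by
    rcases hne with h | h
    · have : 0 < J ^ 2 := by positivity
      nlinarith [sq_nonneg (Q ^ 2)]
    · have : 0 < Q ^ 2 := by positivity
      nlinarith [sq_nonneg J, sq_nonneg Q]
  set s : ℝ := Real.sqrt c with hsdef
  have hs : 0 < s := Real.sqrt_pos.mpr hc0
  have hs2 : s ^ 2 = c := Real.sq_sqrt hc0.le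
  set m : ℝ := (Q ^ 2 + s) / 2 with hm
  have heq : ∀ A : ℝ, 0 < A →
      F1 J Q A - m = (A - 4 * Real.pi * s) ^ 2 / (16 * Real.pi * A) := by
    intro A hA
    rw [F1, hm]
    have hs2' : s ^ 2 = Q ^ 4 + 4 * J ^ 2 := hs2
    field_simp
    linear_combination (-32 * Real.pi ^ 2) * hs2'
  have hF1lb : ∀ A : ℝ, 0 < A → m ≤ F1 J Q A := by
    intro A hA
    have h := heq A hA
    have : 0 ≤ (A - 4 * Real.pi * s) ^ 2 / (16 * Real.pi * A) := by positivity
    linarith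
  have hF2lb : ∀ A : ℝ, 0 < A → A ^ 2 / (32 * Real.pi ^ 2) ≤ F2 lam J Q A := by
    intro A hA
    rw [F2]
    have h1 : 0 ≤ (A / (8 * Real.pi)) * (Q ^ 2 + lam * A ^ 2 / (32 * Real.pi ^ 2)) := by
      positivity
    have h2 : (A / (8 * Real.pi)) * (A / (4 * Real.pi)) = A ^ 2 / (32 * Real.pi ^ 2) := by
      field_simp; ring
    nlinarith [sq_nonneg J]
  have hF2nn : ∀ A : ℝ, 0 < A → 0 ≤ F2 lam J Q A := by
    intro A hA
    have h1 := hF2lb A hA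
    have : (0:ℝ) ≤ A ^ 2 / (32 * Real.pi ^ 2) := by positivity
    linarith
  constructor
  · -- first part
    apply le_antisymm
    · apply csInf_le
      · exact ⟨m, fun x ⟨A, hA, hx⟩ => hx ▸ hF1lb A hA⟩
      · refine ⟨4 * Real.pi * s, by positivity, ?_⟩
        have h := heq (4 * Real.pi * s) (by positivity)
        simp at h
        linarith
    · exact le_csInf ⟨F1 J Q 1, 1, one_pos, rfl⟩ (fun x ⟨A, hA, hx⟩ => hx ▸ hF1lb A hA)
  · -- second part
    set ε : ℝ := min (lam * c / 32) (s / 2) with hε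
    have hε0 : 0 < ε := lt_min (by positivity) (by positivity)
    have key : ∀ A : ℝ, 0 < A → m + ε ≤ F1 J Q A + lam * F2 lam J Q A := by
      intro A hA
      rcases le_or_gt (Real.pi * s) A with hbig | hsmall
      · -- A large: lam * F2 ≥ lam * c / 32
        have h1 := hF1lb A hA
        have h2 := hF2lb A hA
        have h3 : lam * c / 32 ≤ lam * (A ^ 2 / (32 * Real.pi ^ 2)) := by
          rw [div_le_iff₀ (by norm_num : (0:ℝ) < 32)]
          have hA2 : Real.pi ^ 2 * c ≤ A ^ 2 := by
            nlinarith [mul_le_mul hbig hbig (by positivity) hA.le]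
          have heq2 : lam * (A ^ 2 / (32 * Real.pi ^ 2)) * 32 - lam * c =
              lam * (A ^ 2 - Real.pi ^ 2 * c) / Real.pi ^ 2 := by
            field_simp
          have hpos : 0 ≤ lam * (A ^ 2 - Real.pi ^ 2 * c) / Real.pi ^ 2 :=
            div_nonneg (mul_nonneg hlam.le (sub_nonneg.mpr hA2)) (sq_nonneg Real.pi)
          linarith
        have h4 : lam * (A ^ 2 / (32 * Real.pi ^ 2)) ≤ lam * F2 lam J Q A :=
          mul_le_mul_of_nonneg_left h2 hlam.le
        have h5 : ε ≤ lam * c / 32 := min_le_left _ _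
        linarith
      · -- A small: F1 - m ≥ s / 2
        have h2 : 0 ≤ lam * F2 lam J Q A := mul_nonneg hlam.le (hF2nn A hA)
        have h3 : s ≤ Real.pi * c / A := by
          rw [le_div_iff₀ hA]
          nlinarith [mul_le_mul_of_nonneg_left hsmall.le hs.le]
        have h4 : Real.pi / A * (4 * J ^ 2 + Q ^ 4) = Real.pi * c / A := by
          rw [hc]; ring
        have h5 : m + s / 2 ≤ F1 J Q A := by
          rw [F1, h4, hm]
          have : 0 ≤ A / (16 * Real.pi) := by positivity
          linarith
        have h6 : ε ≤ s / 2 := min_le_right _ _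
        linarith
    calc m < m + ε := by linarith
      _ ≤ sInf {x | ∃ A > 0, x = F1 J Q A + lam * F2 lam J Q A} :=
        le_csInf ⟨F1 J Q 1 + lam * F2 lam J Q 1, 1, one_pos, rfl⟩
          (fun x ⟨A, hA, hx⟩ => hx ▸ key A hA)
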